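/- Let n ≥ 1 be a natural number, and let A : ℝ → Matrix n n ℝ be continuously differentiable (entrywise) with A(ρ) symmetric for every ρ. Let λ_max(ρ) denote the largest eigenvalue of A(ρ). Suppose A′(ρ) + A(ρ)² = 1 + E(ρ) with each E(ρ) symmetric and of operator norm ‖E(ρ)‖ ≤ K·e^{−αρ} for constants K > 0, α > 0. Then at every point ρ₀ where λ_max is differentiable, |λ_max′(ρ₀) + λ_max(ρ₀)² − 1| ≤ K·e^{−αρ₀}. -/

import Mathlib

open scoped Matrix.Norms.L2Operator
open RealInnerProductSpace Matrix
lemma dot_eq_inner' {n : ℕ} (x y : EuclideanSpace ℝ (Fin n)) :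
    (⇑x : Fin n → ℝ) ⬝ᵥ (⇑y : Fin n → ℝ) = ⟪x, y⟫ := by
  simp [dotProduct, PiLp.inner_apply, RCLike.inner_apply, conj_trivial, mul_comm]

lemma rayleigh_le {n : ℕ} [Nonempty (Fin n)] {M : Matrix (Fin n) (Fin n) ℝ}
    (hM : M.IsHermitian) (x : EuclideanSpace ℝ (Fin n)) (hx : ‖x‖ = 1) :
    (⇑x : Fin n → ℝ) ⬝ᵥ (M *ᵥ ⇑x) ≤ ⨆ i, hM.eigenvalues i := by
  set b := hM.eigenvectorBasis with hb
  have hsym : Mᵀ = M := by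
    ext i j
    have := congrFun (congrFun hM.eq i) j
    simpa [Matrix.conjTranspose_apply] using this
  set S := ⨆ i, hM.eigenvalues i with hS
  have hle : ∀ i, hM.eigenvalues i ≤ S :=
    fun i => le_ciSup (Set.Finite.bddAbove (Set.finite_range _)) i
  set X : EuclideanSpace ℝ (Fin n) := (WithLp.equiv 2 (Fin n → ℝ)).symm (M *ᵥ ⇑x) with hX
  have h1 : (⇑x : Fin n → ℝ) ⬝ᵥ (M *ᵥ ⇑x) = ⟪x, X⟫ := dot_eq_inner' x X
  have h2 : ⟪x, X⟫ = ∑ i, ⟪x, b i⟫ * ⟪b i, X⟫ := (b.sum_inner_mul_inner x X).symm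
  have h3 : ∀ i, ⟪b i, X⟫ = hM.eigenvalues i * ⟪b i, x⟫ := by
    intro i
    rw [← dot_eq_inner', ← dot_eq_inner']
    show (⇑(b i) : Fin n → ℝ) ⬝ᵥ (M *ᵥ ⇑x) = _
    rw [Matrix.dotProduct_mulVec, ← Matrix.mulVec_transpose, hsym,
      hM.mulVec_eigenvectorBasis, smul_dotProduct]
    rfl
  have h4 : ∑ i, ⟪x, b i⟫ * ⟪b i, x⟫ = 1 := by
    rw [b.sum_inner_mul_inner x x, real_inner_self_eq_norm_sq, hx]; norm_num
  calc (⇑x : Fin n → ℝ) ⬝ᵥ (M *ᵥ ⇑x)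
      = ∑ i, hM.eigenvalues i * (⟪x, b i⟫ * ⟪b i, x⟫) := by
        rw [h1, h2]; exact Finset.sum_congr rfl fun i _ => by rw [h3 i]; ring
    _ ≤ ∑ i, S * (⟪x, b i⟫ * ⟪b i, x⟫) := by
        refine Finset.sum_le_sum fun i _ => ?_
        have hnn : 0 ≤ ⟪x, b i⟫ * ⟪b i, x⟫ := by
          rw [real_inner_comm (b i) x]; exact mul_self_nonneg _
        exact mul_le_mul_of_nonneg_right (hle i) hnn
    _ = S := by rw [← Finset.mul_sum, h4, mul_one]


/-- **Equation (2.5) in the proof of Lemma 2.4.** If `A : ℝ → Sym(n,ℝ)` is continuously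
differentiable with `A' + A² = 1 + E` and `‖E ρ‖ ≤ K·exp(-αρ)`, then the largest
eigenvalue `λ_max` of `A` satisfies `|λ_max' + λ_max² - 1| ≤ K·exp(-αρ₀)` at every
point `ρ₀` where it is differentiable. -/
theorem lambda_max_riccati (n : ℕ) (hn : 1 ≤ n) (K α : ℝ) (hK : 0 < K) (hα : 0 < α)
    (A A' E : ℝ → Matrix (Fin n) (Fin n) ℝ)
    (hA : ∀ ρ, (A ρ).IsHermitian)
    (hderiv : ∀ ρ, ∀ i j, HasDerivAt (fun t => A t i j) (A' ρ i j) ρ)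
    (hcont : ∀ i j, Continuous fun ρ => A' ρ i j)
    (hEsymm : ∀ ρ, (E ρ).IsHermitian)
    (heq : ∀ ρ, A' ρ + (A ρ)^2 = 1 + E ρ)
    (hEnorm : ∀ ρ, ‖E ρ‖ ≤ K * Real.exp (-α * ρ))
    (lmax : ℝ → ℝ) (hlmax : ∀ ρ, lmax ρ = ⨆ i, (hA ρ).eigenvalues i)
    (ρ₀ : ℝ) (hdiff : DifferentiableAt ℝ lmax ρ₀) :
    |deriv lmax ρ₀ + (lmax ρ₀)^2 - 1| ≤ K * Real.exp (-α * ρ₀) := by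
  haveI : NeZero n := ⟨by omega⟩
  haveI : Nonempty (Fin n) := ⟨⟨0, by omega⟩⟩
  obtain ⟨i₀, hi₀⟩ := exists_eq_ciSup_of_finite (f := (hA ρ₀).eigenvalues)
  set x : EuclideanSpace ℝ (Fin n) := (hA ρ₀).eigenvectorBasis i₀ with hxdef
  have hx : ‖x‖ = 1 := (hA ρ₀).eigenvectorBasis.orthonormal.1 i₀
  set v : Fin n → ℝ := ⇑x with hv
  have hlam : (hA ρ₀).eigenvalues i₀ = lmax ρ₀ := by rw [hlmax ρ₀, hi₀]
  have hAv : A ρ₀ *ᵥ v = lmax ρ₀ • v := by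
    rw [hv, hxdef, (hA ρ₀).mulVec_eigenvectorBasis, hlam]
  have hvv : v ⬝ᵥ v = 1 := by
    rw [hv, dot_eq_inner', real_inner_self_eq_norm_sq, hx]; norm_num
  -- the Rayleigh quotient function
  set f : ℝ → ℝ := fun ρ => v ⬝ᵥ (A ρ *ᵥ v) with hf
  have hfle : ∀ ρ, f ρ ≤ lmax ρ := by
    intro ρ
    rw [hlmax ρ]
    exact rayleigh_le (hA ρ) x hx
  have hfρ₀ : f ρ₀ = lmax ρ₀ := by
    rw [hf]; simp only [hAv, dotProduct_smul, smul_eq_mul, hvv, mul_one]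
  have hf' : HasDerivAt f (v ⬝ᵥ (A' ρ₀ *ᵥ v)) ρ₀ := by
    have : ∀ ρ, f ρ = ∑ i, v i * ∑ j, A ρ i j * v j := by
      intro ρ; rfl
    simp only [hf]
    show HasDerivAt (fun ρ => ∑ i, v i * ∑ j, A ρ i j * v j)
      (∑ i, v i * ∑ j, A' ρ₀ i j * v j) ρ₀
    exact HasDerivAt.fun_sum fun i _ =>
      (HasDerivAt.fun_sum fun j _ => (hderiv ρ₀ i j).mul_const (v j)).const_mul (v i)
  -- touching from below gives equality of derivatives
  have hmin : IsLocalMin (fun ρ => lmax ρ - f ρ) ρ₀ := by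
    refine Filter.Eventually.of_forall fun ρ => ?_
    show lmax ρ₀ - f ρ₀ ≤ lmax ρ - f ρ
    rw [hfρ₀, sub_self]
    exact sub_nonneg.2 (hfle ρ)
  have hdg : deriv (fun ρ => lmax ρ - f ρ) ρ₀ = 0 :=
    hmin.deriv_eq_zero
  have hderiv_eq : deriv lmax ρ₀ = v ⬝ᵥ (A' ρ₀ *ᵥ v) := by
    have := deriv_fun_sub hdiff hf'.differentiableAt
    rw [hdg, hf'.deriv] at this
    linarith [this.symm]
  -- algebra with the Riccati equation
  have hA2 : v ⬝ᵥ ((A ρ₀ ^ 2) *ᵥ v) = (lmax ρ₀)^2 := by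
    rw [pow_two, ← Matrix.mulVec_mulVec, hAv, Matrix.mulVec_smul, hAv,
      smul_smul, dotProduct_smul, smul_eq_mul, hvv]
    ring
  have hkey : deriv lmax ρ₀ + (lmax ρ₀)^2 - 1 = v ⬝ᵥ (E ρ₀ *ᵥ v) := by
    have h := congrArg (fun M => v ⬝ᵥ (M *ᵥ v)) (heq ρ₀)
    simp only [Matrix.add_mulVec, dotProduct_add, Matrix.one_mulVec] at h
    rw [hA2, hvv] at h
    rw [hderiv_eq]
    linarith
  rw [hkey]
  -- Cauchy–Schwarz with the operator norm
  set Y : EuclideanSpace ℝ (Fin n) := (WithLp.equiv 2 (Fin n → ℝ)).symm (E ρ₀ *ᵥ v) with hY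
  have h1 : v ⬝ᵥ (E ρ₀ *ᵥ v) = ⟪x, Y⟫ := dot_eq_inner' x Y
  have h2 : |⟪x, Y⟫| ≤ ‖x‖ * ‖Y‖ := abs_real_inner_le_norm x Y
  have h3 : ‖Y‖ ≤ ‖E ρ₀‖ * ‖x‖ := (E ρ₀).l2_opNorm_mulVec x
  calc |v ⬝ᵥ (E ρ₀ *ᵥ v)| ≤ ‖x‖ * ‖Y‖ := by rw [h1]; exact h2
    _ ≤ ‖E ρ₀‖ := by rw [hx, one_mul]; simpa [hx] using h3
    _ ≤ K * Real.exp (-α * ρ₀) := hEnorm ρ₀
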